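/- With ω₁ = dθ − cosψ·((κc²−h²)/(2c³))dh − sinψ·h·dq, ω₂ = dφ + sinψ·((κc²−h²)/(2c³))dh − cosψ·h·dq, ω₃ = dψ + (2c³/(κc²−h²))dq, and c₁,…,c₅ defined by c₁ = 6c³θ − 4h(2c³q+κc²ψ)sinψ − h(3c²κ−h²)cosψ, c₂ = 6c³φ − 4h(2c³q+κc²ψ)cosψ + h(3c²κ−h²)sinψ, c₃ = 2c³q+κc²ψ, c₄ = −h sinψ, c₅ = h cosψ, the 1-forms Θ₁ = dc₁ − 2c₄dc₃ − 4c₃dc₄, Θ₂ = dc₂ + 2c₅dc₃ + 4c₃dc₅, Θ₃ = dc₃ + c₅dc₄ − c₄dc₅ satisfy Θ₁ = 6c³ω₁ + h sinψ(κc²−h²)ω₃, Θ₂ = 6c³ω₂ + h cosψ(κc²−h²)ω₃, Θ₃ = −(h²−κc²)ω₃. -/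

import Mathlib

section
variable (c κ : ℝ)

/-- Coordinates on ℝ⁵: (θ,φ,h,q,ψ) = indices (0,1,2,3,4). -/
noncomputable def c1f (x : Fin 5 → ℝ) : ℝ :=
  6 * c ^ 3 * x 0 - 4 * x 2 * (2 * c ^ 3 * x 3 + κ * c ^ 2 * x 4) * Real.sin (x 4)
    - x 2 * (3 * c ^ 2 * κ - (x 2) ^ 2) * Real.cos (x 4)

noncomputable def c2f (x : Fin 5 → ℝ) : ℝ :=
  6 * c ^ 3 * x 1 - 4 * x 2 * (2 * c ^ 3 * x 3 + κ * c ^ 2 * x 4) * Real.cos (x 4)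
    + x 2 * (3 * c ^ 2 * κ - (x 2) ^ 2) * Real.sin (x 4)

noncomputable def c3f (x : Fin 5 → ℝ) : ℝ := 2 * c ^ 3 * x 3 + κ * c ^ 2 * x 4

noncomputable def c4f (x : Fin 5 → ℝ) : ℝ := -Real.sin (x 4) * x 2

noncomputable def c5f (x : Fin 5 → ℝ) : ℝ := Real.cos (x 4) * x 2

/-- ω₁ evaluated at point x on tangent vector v. -/
noncomputable def om1 (x v : Fin 5 → ℝ) : ℝ :=
  v 0 - Real.cos (x 4) * ((κ * c ^ 2 - (x 2) ^ 2) / (2 * c ^ 3)) * v 2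
    - Real.sin (x 4) * x 2 * v 3

noncomputable def om2 (x v : Fin 5 → ℝ) : ℝ :=
  v 1 + Real.sin (x 4) * ((κ * c ^ 2 - (x 2) ^ 2) / (2 * c ^ 3)) * v 2
    - Real.cos (x 4) * x 2 * v 3

noncomputable def om3 (x v : Fin 5 → ℝ) : ℝ :=
  v 4 + (2 * c ^ 3 / (κ * c ^ 2 - (x 2) ^ 2)) * v 3

end

private lemma hproj' (i : Fin 5) (x : Fin 5 → ℝ) :
    HasFDerivAt (fun x : Fin 5 → ℝ => x i)
      (ContinuousLinearMap.proj i : (Fin 5 → ℝ) →L[ℝ] ℝ) x :=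
  (ContinuousLinearMap.proj i : (Fin 5 → ℝ) →L[ℝ] ℝ).hasFDerivAt

private lemma hsin' (x : Fin 5 → ℝ) :
    HasFDerivAt (fun x : Fin 5 → ℝ => Real.sin (x 4))
      (Real.cos (x 4) • (ContinuousLinearMap.proj 4 : (Fin 5 → ℝ) →L[ℝ] ℝ)) x :=
  by
  have h := (Real.hasDerivAt_sin (x 4)).comp_hasFDerivAt x (hproj' 4 x)
  exact h

private lemma hcos' (x : Fin 5 → ℝ) :
    HasFDerivAt (fun x : Fin 5 → ℝ => Real.cos (x 4))
      ((-Real.sin (x 4)) • (ContinuousLinearMap.proj 4 : (Fin 5 → ℝ) →L[ℝ] ℝ)) x :=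
  by
  have h := (Real.hasDerivAt_cos (x 4)).comp_hasFDerivAt x (hproj' 4 x)
  exact h

private lemma hsq' (x : Fin 5 → ℝ) :
    HasFDerivAt (fun y : Fin 5 → ℝ => y 2 ^ 2)
      ((2 * x 2) • (ContinuousLinearMap.proj 2 : (Fin 5 → ℝ) →L[ℝ] ℝ)) x := by
  have h := (hproj' 2 x).mul (hproj' 2 x)
  rw [Pi.mul_def] at h
  simp only [← pow_two] at h
  refine h.congr_fderiv ?_
  ext y
  simp
  ring

/-- the 1-forms Θ₁ = dc₁ − 2c₄dc₃ − 4c₃dc₄,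
Θ₂ = dc₂ + 2c₅dc₃ + 4c₃dc₅, Θ₃ = dc₃ + c₅dc₄ − c₄dc₅ satisfy
Θ₁ = 6c³ω₁ + h sinψ (κc²−h²) ω₃, Θ₂ = 6c³ω₂ + h cosψ (κc²−h²) ω₃,
Θ₃ = −(h²−κc²) ω₃, as 1-forms (i.e. evaluated on every tangent vector). -/
theorem stmt12 (c κ : ℝ) (hc : c ≠ 0) (x : Fin 5 → ℝ)
    (hne : κ * c ^ 2 - (x 2) ^ 2 ≠ 0) (v : Fin 5 → ℝ) :
    (fderiv ℝ (c1f c κ) x v - 2 * c4f x * fderiv ℝ (c3f c κ) x v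
        - 4 * c3f c κ x * fderiv ℝ c4f x v
      = 6 * c ^ 3 * om1 c κ x v
        + x 2 * Real.sin (x 4) * (κ * c ^ 2 - (x 2) ^ 2) * om3 c κ x v) ∧
    (fderiv ℝ (c2f c κ) x v + 2 * c5f x * fderiv ℝ (c3f c κ) x v
        + 4 * c3f c κ x * fderiv ℝ c5f x v
      = 6 * c ^ 3 * om2 c κ x v
        + x 2 * Real.cos (x 4) * (κ * c ^ 2 - (x 2) ^ 2) * om3 c κ x v) ∧
    (fderiv ℝ (c3f c κ) x v + c5f x * fderiv ℝ c4f x v - c4f x * fderiv ℝ c5f x v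
      = -((x 2) ^ 2 - κ * c ^ 2) * om3 c κ x v) := by
  have hc3 : HasFDerivAt (c3f c κ)
      ((2 * c ^ 3) • (ContinuousLinearMap.proj 3 : (Fin 5 → ℝ) →L[ℝ] ℝ)
        + (κ * c ^ 2) • ContinuousLinearMap.proj 4) x :=
    ((hproj' 3 x).const_mul (2 * c ^ 3)).add ((hproj' 4 x).const_mul (κ * c ^ 2))
  have hc4 : HasFDerivAt (c4f) _ x := ((hsin' x).neg.mul (hproj' 2 x))
  have hc5 : HasFDerivAt (c5f) _ x := ((hcos' x).mul (hproj' 2 x))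
  have hc1 : HasFDerivAt (c1f c κ) _ x :=
    (((hproj' 0 x).const_mul (6 * c ^ 3)).sub
      ((((hproj' 2 x).const_mul 4).mul hc3).mul (hsin' x))).sub
      (((hproj' 2 x).mul ((hsq' x).const_sub (3 * c ^ 2 * κ))).mul (hcos' x))
  have hc2 : HasFDerivAt (c2f c κ) _ x :=
    ((((hproj' 1 x).const_mul (6 * c ^ 3)).sub
      ((((hproj' 2 x).const_mul 4).mul hc3).mul (hcos' x))).add
      (((hproj' 2 x).mul ((hsq' x).const_sub (3 * c ^ 2 * κ))).mul (hsin' x)))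
  rw [hc1.fderiv, hc2.fderiv, hc3.fderiv, hc4.fderiv, hc5.fderiv]
  simp only [ContinuousLinearMap.add_apply, ContinuousLinearMap.sub_apply,
    ContinuousLinearMap.smul_apply, ContinuousLinearMap.coe_smul',
    ContinuousLinearMap.proj_apply, ContinuousLinearMap.neg_apply,
    Pi.smul_apply, Pi.mul_apply, Pi.neg_apply, smul_eq_mul, c3f, c4f, c5f, om1, om2, om3]
  have h2 : (2 : ℝ) * c ^ 3 ≠ 0 := by positivity
  have hne' : c ^ 2 * κ - x 2 ^ 2 ≠ 0 := by rwa [mul_comm]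
  refine ⟨?_, ?_, ?_⟩
  · field_simp
    ring
  · field_simp
    ring
  · field_simp
    linear_combination (v 4 * x 2 ^ 2 * (x 2 ^ 2 - c ^ 2 * κ)) * Real.sin_sq_add_cos_sq (x 4)
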